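/- Let N, S, K be positive integers, let A_1,...,A_S be real N×K matrices, let B and B̂ be real N×N matrices, let a, â ∈ ℝ^N, let τ ∈ ℝ^K, and for each s = 1,...,S let Y_s(0) ∈ ℝ^N and set Y_s = Y_s(0) + A_s τ and u_s = Y_s(0) − a − B·Y_s(0). Write M̂ = (I − B̂)ᵀ(I − B̂) and suppose Σ_{s=1}^S A_sᵀ M̂ A_s is invertible. Then the vector τ̂ = (Σ_{s=1}^S A_sᵀ M̂ A_s)^{-1} Σ_{s=1}^S A_sᵀ (I − B̂)ᵀ((I − B̂)Y_s − â) satisfies the exact decomposition τ̂ = τ + (Σ_{s=1}^S A_sᵀ M̂ A_s)^{-1} Σ_{s=1}^S A_sᵀ (I − B̂)ᵀ( u_s + (B − B̂)Y_s(0) + (a − â) ). -/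
import Mathlib


open Matrix

noncomputable def euclNorm {n : ℕ} (x : Fin n → ℝ) : ℝ := Real.sqrt (∑ i, x i ^ 2)

noncomputable def frobNorm {m n : ℕ} (A : Matrix (Fin m) (Fin n) ℝ) : ℝ :=
  Real.sqrt (∑ i, ∑ j, A i j ^ 2)

lemma sum_mulVec' {ι m n : ℕ} (f : Fin ι → Matrix (Fin m) (Fin n) ℝ) (v : Fin n → ℝ) :
    (∑ i, f i) *ᵥ v = ∑ i, f i *ᵥ v := by
  ext j
  simp [Matrix.mulVec, dotProduct, Matrix.sum_apply, Finset.sum_mul]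
  rw [Finset.sum_comm]

/-- The key algebraic decomposition of the staggered synthetic control estimator:
`τ̂ = τ + (Σₛ Aₛᵀ M̂ Aₛ)⁻¹ Σₛ Aₛᵀ (I − B̂)ᵀ (uₛ + (B − B̂)Yₛ(0) + (a − â))`. -/
theorem stmt0 (N S K : ℕ) (hN : 0 < N) (hS : 0 < S) (hK : 0 < K)
    (A : Fin S → Matrix (Fin N) (Fin K) ℝ)
    (B Bhat : Matrix (Fin N) (Fin N) ℝ)
    (a ahat : Fin N → ℝ) (τ : Fin K → ℝ)
    (Y0 : Fin S → Fin N → ℝ)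
    (Y : Fin S → Fin N → ℝ) (hY : ∀ s, Y s = Y0 s + A s *ᵥ τ)
    (u : Fin S → Fin N → ℝ) (hu : ∀ s, u s = Y0 s - a - B *ᵥ Y0 s)
    (Mhat : Matrix (Fin N) (Fin N) ℝ) (hMhat : Mhat = (1 - Bhat)ᵀ * (1 - Bhat))
    (hinv : IsUnit (∑ s, (A s)ᵀ * Mhat * A s).det)
    (τhat : Fin K → ℝ)
    (hτhat : τhat = (∑ s, (A s)ᵀ * Mhat * A s)⁻¹ *ᵥ
      (∑ s, (A s)ᵀ *ᵥ ((1 - Bhat)ᵀ *ᵥ ((1 - Bhat) *ᵥ Y s - ahat)))) :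
    τhat = τ + (∑ s, (A s)ᵀ * Mhat * A s)⁻¹ *ᵥ
      (∑ s, (A s)ᵀ *ᵥ ((1 - Bhat)ᵀ *ᵥ (u s + (B - Bhat) *ᵥ Y0 s + (a - ahat)))) := by

  have hv : ∀ s, u s + (B - Bhat) *ᵥ Y0 s + (a - ahat)
      = (1 - Bhat) *ᵥ Y0 s - ahat := by
    intro s
    rw [hu, sub_mulVec, sub_mulVec, one_mulVec]
    abel
  have hsum : (∑ s, (A s)ᵀ *ᵥ ((1 - Bhat)ᵀ *ᵥ ((1 - Bhat) *ᵥ Y s - ahat)))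
      = (∑ s, (A s)ᵀ * Mhat * A s) *ᵥ τ
        + ∑ s, (A s)ᵀ *ᵥ ((1 - Bhat)ᵀ *ᵥ (u s + (B - Bhat) *ᵥ Y0 s + (a - ahat))) := by
    rw [sum_mulVec', ← Finset.sum_add_distrib]
    refine Finset.sum_congr rfl fun s _ => ?_
    rw [hv, hY, hMhat, mulVec_add]
    have : (1 - Bhat) *ᵥ Y0 s + (1 - Bhat) *ᵥ (A s *ᵥ τ) - ahat
        = (1 - Bhat) *ᵥ (A s *ᵥ τ) + ((1 - Bhat) *ᵥ Y0 s - ahat) := by abel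
    rw [this, mulVec_add, mulVec_add]
    simp [mulVec_mulVec, Matrix.mul_assoc]
  rw [hτhat, hsum, mulVec_add, mulVec_mulVec,
    Matrix.nonsing_inv_mul _ hinv, one_mulVec]
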